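/- Let f be a complex polynomial of degree n ≥ 4 with no simple roots, with n₂ distinct roots of multiplicity exactly 2 and N₃ distinct roots of multiplicity at least 3. Then the ℂ-vector space W(f) = { p : deg p ≤ n-2, f ∣ f''p - f'p' } has dimension n - 1 - (n₂ + 2N₃). -/

import Mathlib

open Polynomial


noncomputable def Bpoly (β : ℂ) (h p : ℂ[X]) (k : ℕ) : ℂ[X] :=
  ((k:ℂ[X])+2) * ((k:ℂ[X])+1) * h * p + 2 * ((k:ℂ[X])+2) * (X - C β) * derivative h * p
  + (X - C β)^2 * derivative (derivative h) * p
  - ((k:ℂ[X])+2) * (X - C β) * h * derivative p - (X - C β)^2 * derivative h * derivative p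

noncomputable def Cpoly (β : ℂ) (h q : ℂ[X]) (k : ℕ) : ℂ[X] :=
  ((k:ℂ[X])+2) * ((k:ℂ[X])+1) * h * q + 2 * ((k:ℂ[X])+2) * (X - C β) * derivative h * q
  + (X - C β)^2 * derivative (derivative h) * q
  - ((k:ℂ[X])+2) * h * q - ((k:ℂ[X])+2) * (X - C β) * h * derivative q
  - (X - C β) * derivative h * q - (X - C β)^2 * derivative h * derivative q

lemma dpow (β : ℂ) (n : ℕ) :
    derivative ((X - C β)^(n+1)) = ((n:ℂ[X])+1) * (X - C β)^n := by
  rw [derivative_pow, derivative_X_sub_C, mul_one, Nat.add_sub_cancel]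
  simp only [Nat.cast_add, Nat.cast_one, C_add, C_1, Polynomial.C_eq_natCast]

lemma d1 (β : ℂ) (h : ℂ[X]) (k : ℕ) :
    derivative ((X - C β)^(k+2) * h)
    = ((k:ℂ[X])+2) * (X - C β)^(k+1) * h + (X - C β)^(k+2) * derivative h := by
  rw [derivative_mul, show k+2 = (k+1)+1 from rfl, dpow]
  push_cast
  ring

lemma d2 (β : ℂ) (h : ℂ[X]) (k : ℕ) :
    derivative (derivative ((X - C β)^(k+2) * h))
    = ((k:ℂ[X])+2)*((k:ℂ[X])+1) * (X - C β)^k * h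
      + 2*((k:ℂ[X])+2) * (X - C β)^(k+1) * derivative h
      + (X - C β)^(k+2) * derivative (derivative h) := by
  rw [d1, derivative_add, derivative_mul, derivative_mul, derivative_mul, dpow,
    show k+2 = (k+1)+1 from rfl, dpow]
  simp only [derivative_add, derivative_natCast, derivative_ofNat, zero_add, add_zero, zero_mul]
  push_cast
  ring

lemma A_eq (β : ℂ) (h p : ℂ[X]) (k : ℕ) :
    derivative (derivative ((X - C β)^(k+2) * h)) * p
      - derivative ((X - C β)^(k+2) * h) * derivative p
    = (X - C β)^k * Bpoly β h p k := by
  rw [d2, d1, Bpoly]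
  ring

lemma B_eq (β : ℂ) (h q : ℂ[X]) (k : ℕ) :
    Bpoly β h ((X - C β) * q) k = (X - C β) * Cpoly β h q k := by
  simp only [Bpoly, Cpoly, derivative_mul, derivative_X_sub_C, one_mul]
  ring

lemma eval_B (β : ℂ) (h p : ℂ[X]) (k : ℕ) :
    eval β (Bpoly β h p k) = ((k:ℂ)+2)*((k:ℂ)+1) * eval β h * eval β p := by
  simp [Bpoly]
  try ring

lemma eval_Cp (β : ℂ) (h q : ℂ[X]) (k : ℕ) :
    eval β (Cpoly β h q k) = ((k:ℂ)+2)*(k:ℂ) * eval β h * eval β q := by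
  simp [Cpoly]
  try ring

lemma local_bwd (β : ℂ) (h p : ℂ[X]) (k : ℕ)
    (hp : (X - C β) ∣ p) (hk : k = 0 ∨ (X - C β)^2 ∣ p) :
    (X - C β)^(k+2) ∣ derivative (derivative ((X - C β)^(k+2) * h)) * p
      - derivative ((X - C β)^(k+2) * h) * derivative p := by
  rw [A_eq]
  -- find q with p = (X - C β) * q and eval β (Cpoly β h q k) = 0
  obtain ⟨q, hq, hev⟩ : ∃ q, p = (X - C β) * q ∧ eval β (Cpoly β h q k) = 0 := by
    rcases hk with hk | hk
    · obtain ⟨q, hq⟩ := hp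
      exact ⟨q, hq, by simp [eval_Cp, hk]⟩
    · obtain ⟨q, hq⟩ := hk
      refine ⟨(X - C β) * q, by rw [hq]; ring, ?_⟩
      simp [eval_Cp]
  subst hq
  rw [B_eq]
  obtain ⟨w, hw⟩ := (dvd_iff_isRoot).2 hev
  rw [hw]
  exact ⟨w, by ring⟩

lemma local_fwd (β : ℂ) (h p : ℂ[X]) (k : ℕ) (hh : eval β h ≠ 0)
    (hdvd : (X - C β)^(k+2) ∣ derivative (derivative ((X - C β)^(k+2) * h)) * p
      - derivative ((X - C β)^(k+2) * h) * derivative p) :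
    (X - C β) ∣ p ∧ (k = 0 ∨ (X - C β)^2 ∣ p) := by
  rw [A_eq] at hdvd
  have hu : (X - C β) ^ k ≠ 0 := pow_ne_zero _ (X_sub_C_ne_zero β)
  have hB : (X - C β)^2 ∣ Bpoly β h p k := by
    have : (X - C β)^k * (X - C β)^2 ∣ (X - C β)^k * Bpoly β h p k := by
      rw [← pow_add]; exact hdvd
    exact (mul_dvd_mul_iff_left hu).1 this
  have hBroot : eval β (Bpoly β h p k) = 0 := by
    obtain ⟨w, hw⟩ := dvd_trans (dvd_pow_self (X - C β) two_ne_zero) hB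
    simp [hw]
  rw [eval_B] at hBroot
  have hk2 : ((k:ℂ)+2) ≠ 0 := by
    have : ((k+2:ℕ):ℂ) ≠ 0 := Nat.cast_ne_zero.2 (by omega)
    push_cast at this; exact this
  have hk1 : ((k:ℂ)+1) ≠ 0 := by
    have : ((k+1:ℕ):ℂ) ≠ 0 := Nat.cast_ne_zero.2 (by omega)
    push_cast at this; exact this
  have hproot : eval β p = 0 := by
    by_contra hne
    exact mul_ne_zero (mul_ne_zero (mul_ne_zero hk2 hk1) hh) hne hBroot
  have hpdvd : (X - C β) ∣ p := dvd_iff_isRoot.2 hproot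
  refine ⟨hpdvd, ?_⟩
  rcases Nat.eq_zero_or_pos k with hk | hk
  · exact Or.inl hk
  right
  obtain ⟨q, hq⟩ := hpdvd
  subst hq
  rw [B_eq] at hB
  have hC : (X - C β) ∣ Cpoly β h q k := by
    have : (X - C β) * (X - C β) ∣ (X - C β) * Cpoly β h q k := by
      rw [← sq]; exact hB
    exact (mul_dvd_mul_iff_left (X_sub_C_ne_zero β)).1 this
  have hCroot : eval β (Cpoly β h q k) = 0 := by
    obtain ⟨w, hw⟩ := hC; simp [hw]
  rw [eval_Cp] at hCroot
  have hkne : (k:ℂ) ≠ 0 := Nat.cast_ne_zero.2 hk.ne'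
  have hqroot : eval β q = 0 := by
    by_contra hne
    exact mul_ne_zero (mul_ne_zero (mul_ne_zero hk2 hkne) hh) hne hCroot
  obtain ⟨w, hw⟩ := dvd_iff_isRoot.2 hqroot
  exact ⟨w, by rw [hw]; ring⟩

lemma pairwise_cop (f : ℂ[X]) (e : ℂ → ℕ) :
    (↑f.roots.toFinset : Set ℂ).Pairwise (Function.onFun IsCoprime fun β => (X - C β)^(e β)) :=
  fun a _ b _ hab => ((pairwise_coprime_X_sub_C Function.injective_id) hab).pow

lemma key (f : ℂ[X]) (hf0 : f ≠ 0)
    (hmult : ∀ β : ℂ, f.IsRoot β → 2 ≤ f.rootMultiplicity β) (p : ℂ[X]) :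
    (f ∣ derivative (derivative f) * p - derivative f * derivative p)
    ↔ ∀ β ∈ f.roots.toFinset, (X - C β)^(min 2 (f.rootMultiplicity β - 1)) ∣ p := by
  constructor
  · intro hdvd β hβ
    have hroot : f.IsRoot β := isRoot_of_mem_roots (Multiset.mem_toFinset.1 hβ)
    have hm : 2 ≤ f.rootMultiplicity β := hmult β hroot
    obtain ⟨k, hk⟩ : ∃ k, f.rootMultiplicity β = k + 2 := ⟨_, (Nat.sub_add_cancel hm).symm⟩
    have hf : (X - C β)^(k+2) * (f /ₘ (X - C β)^(f.rootMultiplicity β)) = f := by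
      rw [← hk]; exact f.pow_mul_divByMonic_rootMultiplicity_eq β
    have hh : eval β (f /ₘ (X - C β)^(f.rootMultiplicity β)) ≠ 0 :=
      eval_divByMonic_pow_rootMultiplicity_ne_zero β hf0
    have hdvd' : (X - C β)^(k+2) ∣
        derivative (derivative f) * p - derivative f * derivative p :=
      (hk ▸ pow_rootMultiplicity_dvd f β).trans hdvd
    rw [← hf] at hdvd'
    obtain ⟨h1, h2⟩ := local_fwd β _ p k hh hdvd'
    rw [hk]
    rcases h2 with h2 | h2
    · subst h2; simpa using h1
    · have : min 2 (k + 2 - 1) ≤ 2 := min_le_left _ _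
      exact (pow_dvd_pow _ this).trans h2
  · intro hall
    have feq : f = C f.leadingCoeff *
        ∏ β ∈ f.roots.toFinset, (X - C β)^(f.rootMultiplicity β) := by
      conv_lhs => rw [(IsAlgClosed.splits f).eq_prod_roots]
      rw [prod_multiset_root_eq_finset_root]
    have hprod : (∏ β ∈ f.roots.toFinset, (X - C β)^(f.rootMultiplicity β)) ∣
        derivative (derivative f) * p - derivative f * derivative p := by
      refine Finset.prod_dvd_of_coprime (pairwise_cop f _) fun β hβ => ?_
      have hroot : f.IsRoot β := isRoot_of_mem_roots (Multiset.mem_toFinset.1 hβ)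
      have hm : 2 ≤ f.rootMultiplicity β := hmult β hroot
      obtain ⟨k, hk⟩ : ∃ k, f.rootMultiplicity β = k + 2 := ⟨_, (Nat.sub_add_cancel hm).symm⟩
      have hf : (X - C β)^(k+2) * (f /ₘ (X - C β)^(f.rootMultiplicity β)) = f := by
        rw [← hk]; exact f.pow_mul_divByMonic_rootMultiplicity_eq β
      have hp := hall β hβ
      rw [hk] at hp ⊢
      rw [← hf]
      rcases Nat.eq_zero_or_pos k with hk0 | hk0
      · subst hk0
        exact local_bwd β _ p 0 (by simpa using hp) (Or.inl rfl)
      · have hmin : min 2 (k + 2 - 1) = 2 := by omega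
        rw [hmin] at hp
        exact local_bwd β _ p k ((dvd_pow_self _ two_ne_zero).trans hp) (Or.inr hp)
    have hc : f.leadingCoeff ≠ 0 := leadingCoeff_ne_zero.2 hf0
    set c := f.leadingCoeff with hcdef
    set P := ∏ β ∈ f.roots.toFinset, (X - C β)^(f.rootMultiplicity β) with hPdef
    have hfP : f ∣ P := by
      refine ⟨C c⁻¹, ?_⟩
      rw [feq, mul_comm (C c) P, mul_assoc, ← C_mul, mul_inv_cancel₀ hc, C_1, mul_one]
    exact hfP.trans hprod

lemma g_dvd_iff (f p : ℂ[X]) :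
    (∏ β ∈ f.roots.toFinset, (X - C β)^(min 2 (f.rootMultiplicity β - 1))) ∣ p
    ↔ ∀ β ∈ f.roots.toFinset, (X - C β)^(min 2 (f.rootMultiplicity β - 1)) ∣ p :=
  ⟨fun H β hβ => (Finset.dvd_prod_of_mem (fun β => (X - C β)^(min 2 (f.rootMultiplicity β - 1))) hβ).trans H,
   fun H => Finset.prod_dvd_of_coprime (pairwise_cop f _) H⟩

/-- The space `W(f)` of polynomials `p` of degree at most `deg f - 2` such that
`f` divides `f'' p - f' p'`. -/
noncomputable def Wspace (f : Polynomial ℂ) : Submodule ℂ (Polynomial ℂ) where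
  carrier := {p | p.degree ≤ (f.natDegree - 2 : ℕ) ∧
    f ∣ (derivative (derivative f) * p - derivative f * derivative p)}
  add_mem' := by
    rintro a b ⟨ha1, ha2⟩ ⟨hb1, hb2⟩
    refine ⟨le_trans (degree_add_le a b) (max_le ha1 hb1), ?_⟩
    have := dvd_add ha2 hb2
    simpa [mul_add, add_sub_add_comm] using this
  zero_mem' := by simp
  smul_mem' := by
    rintro c a ⟨ha1, ha2⟩
    refine ⟨le_trans (degree_smul_le c a) ha1, ?_⟩
    have := Dvd.dvd.mul_left ha2 (C c)
    simpa [smul_eq_C_mul, mul_sub, mul_left_comm, mul_comm, mul_assoc] using this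
  

lemma sumE (f : ℂ[X]) (hf0 : f ≠ 0)
    (hmult : ∀ β : ℂ, f.IsRoot β → 2 ≤ f.rootMultiplicity β) :
    ∑ β ∈ f.roots.toFinset, min 2 (f.rootMultiplicity β - 1)
    = (f.roots.toFinset.filter (fun β => f.rootMultiplicity β = 2)).card
      + 2 * (f.roots.toFinset.filter (fun β => 3 ≤ f.rootMultiplicity β)).card := by
  classical
  rw [← Finset.sum_filter_add_sum_filter_not f.roots.toFinset
    (fun β => f.rootMultiplicity β = 2)]
  have h1 : ∑ β ∈ f.roots.toFinset.filter (fun β => f.rootMultiplicity β = 2),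
      min 2 (f.rootMultiplicity β - 1)
      = (f.roots.toFinset.filter (fun β => f.rootMultiplicity β = 2)).card := by
    rw [Finset.sum_congr rfl (fun β hβ => show min 2 (f.rootMultiplicity β - 1) = 1 from by
      have := (Finset.mem_filter.1 hβ).2; omega)]
    simp
  have hfilt : f.roots.toFinset.filter (fun β => ¬ f.rootMultiplicity β = 2)
      = f.roots.toFinset.filter (fun β => 3 ≤ f.rootMultiplicity β) := by
    refine Finset.filter_congr (fun β hβ => ?_)
    have h2 := hmult β (isRoot_of_mem_roots (Multiset.mem_toFinset.1 hβ))
    constructor <;> intro h <;> omega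
  have h2 : ∑ β ∈ f.roots.toFinset.filter (fun β => ¬ f.rootMultiplicity β = 2),
      min 2 (f.rootMultiplicity β - 1)
      = 2 * (f.roots.toFinset.filter (fun β => 3 ≤ f.rootMultiplicity β)).card := by
    rw [hfilt, Finset.sum_congr rfl (fun β hβ => show min 2 (f.rootMultiplicity β - 1) = 2 from by
      have := (Finset.mem_filter.1 hβ).2; omega), Finset.sum_const, smul_eq_mul, mul_comm]
  rw [h1, h2]

theorem stmt4 (f : Polynomial ℂ) (hn : 4 ≤ f.natDegree)
    (hmult : ∀ β : ℂ, f.IsRoot β → 2 ≤ f.rootMultiplicity β)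
    (n₂ N₃ : ℕ)
    (hn₂ : n₂ = (f.roots.toFinset.filter (fun β => f.rootMultiplicity β = 2)).card)
    (hN₃ : N₃ = (f.roots.toFinset.filter (fun β => 3 ≤ f.rootMultiplicity β)).card) :
    Module.finrank ℂ (Wspace f) = f.natDegree - 1 - (n₂ + 2 * N₃) := by
  classical
  have hf0 : f ≠ 0 := fun h => by simp [h] at hn
  set g : ℂ[X] := ∏ β ∈ f.roots.toFinset, (X - C β)^(min 2 (f.rootMultiplicity β - 1))
    with hgdef
  have hgmonic : g.Monic := monic_prod_of_monic _ _ fun β _ => (monic_X_sub_C β).pow _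
  have hg0 : g ≠ 0 := hgmonic.ne_zero
  set E : ℕ := ∑ β ∈ f.roots.toFinset, min 2 (f.rootMultiplicity β - 1) with hEdef
  have hgdeg : g.natDegree = E := by
    rw [hgdef, natDegree_prod _ _ (fun β _ => pow_ne_zero _ (X_sub_C_ne_zero β))]
    simp [natDegree_pow, hEdef]
  have hE : E = n₂ + 2 * N₃ := by rw [hn₂, hN₃, hEdef]; exact sumE f hf0 hmult
  set K : ℕ := f.natDegree - 1 - E with hKdef
  have hmem : ∀ p, p ∈ Wspace f ↔ (p.degree ≤ ((f.natDegree - 2 : ℕ) : WithBot ℕ) ∧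
      f ∣ (derivative (derivative f) * p - derivative f * derivative p)) := fun p => Iff.rfl
  have hWeq : Wspace f = Submodule.map (LinearMap.mulLeft ℂ g) (degreeLT ℂ K) := by
    ext p
    rw [hmem, Submodule.mem_map]
    constructor
    · rintro ⟨hdeg, hdvd⟩
      obtain ⟨q, hq⟩ := (g_dvd_iff f p).2 ((key f hf0 hmult p).1 hdvd)
      refine ⟨q, ?_, by simpa [LinearMap.mulLeft_apply] using hq.symm⟩
      rw [mem_degreeLT]
      rcases eq_or_ne q 0 with h | h
      · subst h; simp [degree_zero]
      · have hp0 : p ≠ 0 := by rw [hq]; exact mul_ne_zero hg0 h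
        have hnd : p.natDegree ≤ f.natDegree - 2 := natDegree_le_iff_degree_le.2 hdeg
        have hnd2 : p.natDegree = E + q.natDegree := by
          rw [hq, natDegree_mul hg0 h, hgdeg]
        rw [degree_eq_natDegree h]
        exact_mod_cast (by omega : q.natDegree < K)
    · rintro ⟨q, hqmem, hq⟩
      rw [mem_degreeLT] at hqmem
      simp only [LinearMap.mulLeft_apply] at hq
      subst hq
      constructor
      · rcases eq_or_ne q 0 with h | h
        · subst h; simp
        · have hqd : q.natDegree < K := by
            rw [degree_eq_natDegree h] at hqmem
            exact_mod_cast hqmem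
          have : (g*q).natDegree = E + q.natDegree := by
            rw [natDegree_mul hg0 h, hgdeg]
          exact natDegree_le_iff_degree_le.1 (by omega)
      · exact (key f hf0 hmult _).2 ((g_dvd_iff f _).1 ⟨q, rfl⟩)
  have hinj : Function.Injective (LinearMap.mulLeft ℂ g) := fun x y hxy => by
    simp only [LinearMap.mulLeft_apply] at hxy
    exact mul_left_cancel₀ hg0 hxy
  rw [hWeq, ← LinearEquiv.finrank_eq (Submodule.equivMapOfInjective _ hinj (degreeLT ℂ K)),
    LinearEquiv.finrank_eq (degreeLTEquiv ℂ K), Module.finrank_fin_fun]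
  omega
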